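/- Let d be even, let U be a real orthogonal d×d matrix, and let (i₁,j₁), …, (i_{d/2}, j_{d/2}) be a partition of {1,…,d} into d/2 disjoint pairs. Then there exist extended orthogonal Givens transformations G₁, …, G_{d/2}, where G_k acts on the pair (i_k, j_k), such that ‖U − G₁ G₂ ⋯ G_{d/2}‖_F² = 2d − 2·Σ_{k=1}^{d/2} ‖U_{⟨i_k, j_k⟩}‖_*. -/

import Mathlib

open Matrix

/-- Squared Frobenius norm of a real matrix. -/
def frobSq {m n : ℕ} (A : Matrix (Fin m) (Fin n) ℝ) : ℝ := ∑ i, ∑ j, (A i j) ^ 2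

/-- The singular values of a real square matrix `A`: the square roots of the
eigenvalues of `AᵀA` (here `Aᴴ = Aᵀ` since the matrix is real). -/
noncomputable def singVals {n : ℕ} (A : Matrix (Fin n) (Fin n) ℝ) : Fin n → ℝ :=
  fun i => Real.sqrt ((Matrix.isHermitian_conjTranspose_mul_self A).eigenvalues i)

/-- The nuclear norm of a real square matrix: the sum of its singular values. -/
noncomputable def nuclearNorm {n : ℕ} (A : Matrix (Fin n) (Fin n) ℝ) : ℝ :=
  ∑ i, singVals A i

/-- The 2×2 submatrix `Z_{⟨i,j⟩} = [[Z_ii, Z_ij],[Z_ji, Z_jj]]`. -/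
def sub2 {d : ℕ} (Z : Matrix (Fin d) (Fin d) ℝ) (i j : Fin d) : Matrix (Fin 2) (Fin 2) ℝ :=
  !![Z i i, Z i j; Z j i, Z j j]

/-- The score `C_ij(Z) = ‖Z_{⟨i,j⟩}‖_* − tr(Z_{⟨i,j⟩})`. -/
noncomputable def score {d : ℕ} (Z : Matrix (Fin d) (Fin d) ℝ) (i j : Fin d) : ℝ :=
  nuclearNorm (sub2 Z i j) - (sub2 Z i j).trace

/-- An extended orthogonal Givens transformation on indices `i < j`: equal to the identity
except for the 2×2 block on rows/columns `i, j`, which is either a rotation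
`[[c, −s],[s, c]]` or a reflection `[[c, s],[s, −c]]` with `c² + s² = 1`. -/
def IsExtGivens {d : ℕ} (i j : Fin d) (G : Matrix (Fin d) (Fin d) ℝ) : Prop :=
  (∃ c s : ℝ, c ^ 2 + s ^ 2 = 1 ∧
    ((G i i = c ∧ G i j = -s ∧ G j i = s ∧ G j j = c) ∨
     (G i i = c ∧ G i j = s ∧ G j i = s ∧ G j j = -c))) ∧
  (∀ k, k ≠ i → k ≠ j → G k k = 1) ∧
  (∀ k l, k ≠ l → ¬(k = i ∧ l = j) → ¬(k = j ∧ l = i) → G k l = 0)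

/-- A Givens rotation on indices `i < j`. -/
def IsGivensRotation {d : ℕ} (i j : Fin d) (G : Matrix (Fin d) (Fin d) ℝ) : Prop :=
  (∃ c s : ℝ, c ^ 2 + s ^ 2 = 1 ∧
    G i i = c ∧ G i j = -s ∧ G j i = s ∧ G j j = c) ∧
  (∀ k, k ≠ i → k ≠ j → G k k = 1) ∧
  (∀ k l, k ≠ l → ¬(k = i ∧ l = j) → ¬(k = j ∧ l = i) → G k l = 0)

/-- The squared off-diagonal "norm" `off(M)² = Σ_{t≠q} M_tq²`. -/
def offSq {d : ℕ} (M : Matrix (Fin d) (Fin d) ℝ) : ℝ :=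
  ∑ t, ∑ q, if t ≠ q then (M t q) ^ 2 else 0

/-! ### Auxiliary lemmas -/

lemma trace_eq_sum_eig {n : ℕ} {A : Matrix (Fin n) (Fin n) ℝ} (hA : A.IsHermitian) :
    A.trace = ∑ i, hA.eigenvalues i := by
  conv_lhs => rw [hA.spectral_theorem]
  rw [Unitary.conjStarAlgAut_apply, Matrix.trace_mul_cycle]
  have h1 : (star (hA.eigenvectorUnitary : Matrix (Fin n) (Fin n) ℝ)) *
      (hA.eigenvectorUnitary : Matrix (Fin n) (Fin n) ℝ) = 1 := hA.eigenvectorUnitary.2.1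
  rw [h1, one_mul, Matrix.trace_diagonal]
  simp

lemma nuclearNorm_two (A : Matrix (Fin 2) (Fin 2) ℝ) :
    nuclearNorm A = Real.sqrt (frobSq A + 2 * |A.det|) := by
  have hH := Matrix.isHermitian_conjTranspose_mul_self A
  have h0 : 0 ≤ hH.eigenvalues 0 := Matrix.eigenvalues_conjTranspose_mul_self_nonneg A 0
  have h1 : 0 ≤ hH.eigenvalues 1 := Matrix.eigenvalues_conjTranspose_mul_self_nonneg A 1
  have hsum : hH.eigenvalues 0 + hH.eigenvalues 1 = frobSq A := by
    have h := (trace_eq_sum_eig hH).symm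
    rw [Fin.sum_univ_two] at h
    rw [h]
    simp [Matrix.trace, Matrix.mul_apply, Matrix.conjTranspose_apply, frobSq,
      Fin.sum_univ_two, Matrix.diag]
    ring
  have hprod : hH.eigenvalues 0 * hH.eigenvalues 1 = A.det ^ 2 := by
    have h := hH.det_eq_prod_eigenvalues
    rw [Fin.prod_univ_two] at h
    rw [Matrix.det_mul, Matrix.det_conjTranspose, star_trivial] at h
    simp only [RCLike.ofReal_real_eq_id, id] at h
    rw [← h]; ring
  unfold nuclearNorm singVals
  rw [Fin.sum_univ_two]
  have key : frobSq A + 2 * |A.det| =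
      (Real.sqrt (hH.eigenvalues 0) + Real.sqrt (hH.eigenvalues 1)) ^ 2 := by
    have hab : Real.sqrt (hH.eigenvalues 0) * Real.sqrt (hH.eigenvalues 1) = |A.det| := by
      rw [← Real.sqrt_mul h0, hprod, Real.sqrt_sq_eq_abs]
    rw [add_sq, Real.sq_sqrt h0, Real.sq_sqrt h1, mul_assoc, hab]
    linarith [hsum]
  rw [key, Real.sqrt_sq (by positivity)]

lemma exists_unit (p q : ℝ) : ∃ x y : ℝ, x ^ 2 + y ^ 2 = 1 ∧
    p * x + q * y = Real.sqrt (p ^ 2 + q ^ 2) := by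
  rcases eq_or_ne (Real.sqrt (p ^ 2 + q ^ 2)) 0 with hr | hr
  · have hle : p ^ 2 + q ^ 2 ≤ 0 := Real.sqrt_eq_zero'.mp hr
    have hp : p = 0 := by nlinarith
    have hq : q = 0 := by nlinarith
    exact ⟨1, 0, by norm_num, by rw [hp, hq]; simp⟩
  · set r := Real.sqrt (p ^ 2 + q ^ 2) with hrdef
    have hr2 : r ^ 2 = p ^ 2 + q ^ 2 := Real.sq_sqrt (by positivity)
    refine ⟨p / r, q / r, ?_, ?_⟩
    · have h : (p / r) ^ 2 + (q / r) ^ 2 = (p ^ 2 + q ^ 2) / r ^ 2 := by ring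
      rw [h, ← hr2, div_self (pow_ne_zero 2 hr)]
    · have h : p * (p / r) + q * (q / r) = (p ^ 2 + q ^ 2) / r := by ring
      rw [h, ← hr2, sq, mul_div_assoc, div_self hr, mul_one]

lemma exists_g (A : Matrix (Fin 2) (Fin 2) ℝ) :
    ∃ g : Matrix (Fin 2) (Fin 2) ℝ,
      (∃ x y : ℝ, x ^ 2 + y ^ 2 = 1 ∧
        ((g 0 0 = x ∧ g 0 1 = -y ∧ g 1 0 = y ∧ g 1 1 = x) ∨
         (g 0 0 = x ∧ g 0 1 = y ∧ g 1 0 = y ∧ g 1 1 = -x))) ∧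
      A 0 0 * g 0 0 + A 0 1 * g 0 1 + A 1 0 * g 1 0 + A 1 1 * g 1 1 = nuclearNorm A := by
  rw [nuclearNorm_two]
  have hdet : A.det = A 0 0 * A 1 1 - A 0 1 * A 1 0 := by simp [Matrix.det_fin_two]
  have hfro : frobSq A = A 0 0 ^ 2 + A 0 1 ^ 2 + A 1 0 ^ 2 + A 1 1 ^ 2 := by
    simp [frobSq, Fin.sum_univ_two]; ring
  rcases le_or_gt 0 A.det with hd | hd
  · obtain ⟨x, y, hxy, hval⟩ := exists_unit (A 0 0 + A 1 1) (A 1 0 - A 0 1)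
    refine ⟨!![x, -y; y, x], ⟨x, y, hxy, Or.inl (by simp)⟩, ?_⟩
    have harg : frobSq A + 2 * |A.det| = (A 0 0 + A 1 1) ^ 2 + (A 1 0 - A 0 1) ^ 2 := by
      rw [abs_of_nonneg hd, hdet, hfro]; ring
    rw [harg, ← hval]
    simp [Matrix.cons_val_zero, Matrix.cons_val_one]
    ring
  · obtain ⟨x, y, hxy, hval⟩ := exists_unit (A 0 0 - A 1 1) (A 0 1 + A 1 0)
    refine ⟨!![x, y; y, -x], ⟨x, y, hxy, Or.inr (by simp)⟩, ?_⟩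
    have harg : frobSq A + 2 * |A.det| = (A 0 0 - A 1 1) ^ 2 + (A 0 1 + A 1 0) ^ 2 := by
      rw [abs_of_neg hd, hdet, hfro]; ring
    rw [harg, ← hval]
    simp [Matrix.cons_val_zero, Matrix.cons_val_one]
    ring

/-- A matrix equal to the identity outside the rows/columns indexed by `S`. -/
def Blocky {d : ℕ} (S : Finset (Fin d)) (G : Matrix (Fin d) (Fin d) ℝ) : Prop :=
  (∀ t ∉ S, ∀ q, G t q = if t = q then 1 else 0) ∧ (∀ t ∈ S, ∀ q ∉ S, G t q = 0)

lemma blocky_mul_left {d : ℕ} {S T : Finset (Fin d)} {G H : Matrix (Fin d) (Fin d) ℝ}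
    (hG : Blocky S G) (hH : Blocky T H) (hd : Disjoint S T) {t : Fin d} (ht : t ∈ S)
    (q : Fin d) : (G * H) t q = G t q := by
  rw [Matrix.mul_apply]
  have key : ∀ r, G t r * H r q = if r = q then G t r else 0 := by
    intro r
    by_cases hr : r ∈ S
    · rw [hH.1 r (Finset.disjoint_left.mp hd hr)]
      split_ifs <;> ring
    · rw [hG.2 t ht r hr]; split_ifs <;> ring
  simp_rw [key]
  simp

lemma blocky_mul_right {d : ℕ} {S T : Finset (Fin d)} {G H : Matrix (Fin d) (Fin d) ℝ}
    (hG : Blocky S G) (hH : Blocky T H) (hd : Disjoint S T) {t : Fin d} (ht : t ∈ T)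
    (q : Fin d) : (G * H) t q = H t q := by
  rw [Matrix.mul_apply]
  have hts : t ∉ S := Finset.disjoint_right.mp hd ht
  have key : ∀ r, G t r * H r q = if t = r then H r q else 0 := by
    intro r; rw [hG.1 t hts r]; split_ifs <;> ring
  simp_rw [key]
  simp

lemma blocky_mul {d : ℕ} {S T : Finset (Fin d)} {G H : Matrix (Fin d) (Fin d) ℝ}
    (hG : Blocky S G) (hH : Blocky T H) (hd : Disjoint S T) :
    Blocky (S ∪ T) (G * H) := by
  constructor
  · intro t ht q
    have htS : t ∉ S := fun h => ht (Finset.mem_union_left _ h)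
    have htT : t ∉ T := fun h => ht (Finset.mem_union_right _ h)
    rw [Matrix.mul_apply]
    have key : ∀ r, G t r * H r q = if t = r then H r q else 0 := by
      intro r; rw [hG.1 t htS r]; split_ifs <;> ring
    simp_rw [key]
    simpa using hH.1 t htT q
  · intro t ht q hq
    rcases Finset.mem_union.mp ht with h | h
    · rw [blocky_mul_left hG hH hd h,
        hG.2 t h q (fun hqS => hq (Finset.mem_union_left _ hqS))]
    · rw [blocky_mul_right hG hH hd h,
        hH.2 t h q (fun hqT => hq (Finset.mem_union_right _ hqT))]

lemma blocky_prod {d : ℕ} : ∀ {n : ℕ} (G : Fin n → Matrix (Fin d) (Fin d) ℝ)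
    (S : Fin n → Finset (Fin d)), (∀ k, Blocky (S k) (G k)) →
    (∀ k l, k ≠ l → Disjoint (S k) (S l)) →
    Blocky (Finset.univ.biUnion S) (List.ofFn G).prod ∧
    ∀ k, ∀ t ∈ S k, ∀ q, (List.ofFn G).prod t q = G k t q := by
  intro n
  induction n with
  | zero =>
    intro G S hB hd
    refine ⟨⟨fun t ht q => by simp [Matrix.one_apply],
      fun t ht => by simp at ht⟩, fun k => k.elim0⟩
  | succ n ih =>
    intro G S hB hd
    rw [List.ofFn_succ, List.prod_cons]
    obtain ⟨hBP, hEP⟩ := ih (fun k => G k.succ) (fun k => S k.succ)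
      (fun k => hB k.succ) (fun k l hkl => hd k.succ l.succ (by simpa using hkl))
    have hdisj : Disjoint (S 0) (Finset.univ.biUnion fun k : Fin n => S k.succ) := by
      rw [Finset.disjoint_biUnion_right]
      intro k _
      exact hd 0 k.succ (Fin.succ_ne_zero k).symm
    have hU : (Finset.univ.biUnion S) =
        S 0 ∪ Finset.univ.biUnion (fun k : Fin n => S k.succ) := by
      ext t
      simp only [Finset.mem_biUnion, Finset.mem_union, Finset.mem_univ, true_and]
      constructor
      · rintro ⟨k, hk⟩
        rcases Fin.eq_zero_or_eq_succ k with rfl | ⟨k', rfl⟩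
        · exact Or.inl hk
        · exact Or.inr ⟨k', hk⟩
      · rintro (h | ⟨k', h⟩)
        exacts [⟨0, h⟩, ⟨k'.succ, h⟩]
    refine ⟨hU ▸ blocky_mul (hB 0) hBP hdisj, ?_⟩
    intro k
    rcases Fin.eq_zero_or_eq_succ k with rfl | ⟨k', rfl⟩
    · intro t ht q
      exact blocky_mul_left (hB 0) hBP hdisj ht q
    · intro t ht q
      rw [blocky_mul_right (hB 0) hBP hdisj
        (Finset.mem_biUnion.mpr ⟨k', Finset.mem_univ _, ht⟩) q, hEP k' t ht q]

/-- The extended Givens matrix built from a 2×2 block `g` on indices `i, j`. -/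
def embed {d : ℕ} (i j : Fin d) (g : Matrix (Fin 2) (Fin 2) ℝ) :
    Matrix (Fin d) (Fin d) ℝ := fun t q =>
  if t = i then (if q = i then g 0 0 else if q = j then g 0 1 else 0)
  else if t = j then (if q = i then g 1 0 else if q = j then g 1 1 else 0)
  else if t = q then 1 else 0

lemma embed_row_i {d : ℕ} (i j : Fin d) (g : Matrix (Fin 2) (Fin 2) ℝ) (q : Fin d) :
    embed i j g i q = if q = i then g 0 0 else if q = j then g 0 1 else 0 := by
  simp [embed]

lemma embed_row_j {d : ℕ} {i j : Fin d} (hij : i ≠ j) (g : Matrix (Fin 2) (Fin 2) ℝ)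
    (q : Fin d) : embed i j g j q = if q = i then g 1 0 else if q = j then g 1 1 else 0 := by
  simp [embed, hij.symm]

lemma blocky_embed {d : ℕ} (i j : Fin d) (g : Matrix (Fin 2) (Fin 2) ℝ) :
    Blocky {i, j} (embed i j g) := by
  constructor
  · intro t ht q
    simp only [Finset.mem_insert, Finset.mem_singleton, not_or] at ht
    simp [embed, ht.1, ht.2]
  · intro t ht q hq
    simp only [Finset.mem_insert, Finset.mem_singleton, not_or] at ht hq
    unfold embed
    rcases ht with rfl | rfl <;> split_ifs <;> simp_all

lemma isExtGivens_embed {d : ℕ} {i j : Fin d} (hij : i ≠ j)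
    {g : Matrix (Fin 2) (Fin 2) ℝ}
    (hform : ∃ x y : ℝ, x ^ 2 + y ^ 2 = 1 ∧
      ((g 0 0 = x ∧ g 0 1 = -y ∧ g 1 0 = y ∧ g 1 1 = x) ∨
       (g 0 0 = x ∧ g 0 1 = y ∧ g 1 0 = y ∧ g 1 1 = -x))) :
    IsExtGivens i j (embed i j g) := by
  obtain ⟨x, y, hxy, hg⟩ := hform
  have e1 : embed i j g i i = g 0 0 := by rw [embed_row_i]; simp
  have e2 : embed i j g i j = g 0 1 := by rw [embed_row_i]; simp [hij.symm]
  have e3 : embed i j g j i = g 1 0 := by rw [embed_row_j hij]; simp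
  have e4 : embed i j g j j = g 1 1 := by rw [embed_row_j hij]; simp [hij.symm]
  refine ⟨⟨x, y, hxy, ?_⟩, ?_, ?_⟩
  · rcases hg with ⟨h1, h2, h3, h4⟩ | ⟨h1, h2, h3, h4⟩
    · exact Or.inl ⟨e1.trans h1, e2.trans h2, e3.trans h3, e4.trans h4⟩
    · exact Or.inr ⟨e1.trans h1, e2.trans h2, e3.trans h3, e4.trans h4⟩
  · intro k hki hkj
    simp [embed, hki, hkj]
  · intro k l hkl hk1 hk2
    unfold embed
    by_cases hki : k = i
    · have hli : l ≠ i := fun h => hkl (hki.trans h.symm)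
      have hlj : l ≠ j := fun h => hk1 ⟨hki, h⟩
      simp [hki, hli, hlj]
    · by_cases hkj : k = j
      · have hli : l ≠ i := fun h => hk2 ⟨hkj, h⟩
        have hlj : l ≠ j := fun h => hkl (hkj.trans h.symm)
        simp [hki, hkj, hli, hlj]
      · simp [hki, hkj, hkl]

lemma sum_ite_pair {d : ℕ} {i j : Fin d} (hij : i ≠ j) (x y : ℝ) (f : Fin d → ℝ)
    (hf : ∀ q, f q = if q = i then x else if q = j then y else 0) :
    ∑ q, f q = x + y := by
  have key : ∀ q : Fin d, f q = (if q = i then x else 0) + (if q = j then y else 0) := by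
    intro q
    rw [hf q]
    rcases eq_or_ne q i with rfl | hqi
    · simp [hij]
    · simp [hqi]
  rw [Finset.sum_congr rfl fun q _ => key q, Finset.sum_add_distrib]
  simp

lemma sum_pairs {m : ℕ} (iv jv : Fin m → Fin (2 * m)) (hlt : ∀ k, iv k < jv k)
    (hpart : ∀ t : Fin (2 * m), ∃! k : Fin m, t = iv k ∨ t = jv k)
    (f : Fin (2 * m) → ℝ) :
    ∑ t, f t = ∑ k, (f (iv k) + f (jv k)) := by
  have hbij : Function.Bijective
      (fun p : Fin m × Fin 2 => if p.2 = 0 then iv p.1 else jv p.1) := by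
    constructor
    · rintro ⟨k, b⟩ ⟨k', b'⟩ h
      simp only at h
      have hp1 : (if b = 0 then iv k else jv k) = iv k ∨
          (if b = 0 then iv k else jv k) = jv k := by split_ifs <;> simp
      have hp2 : (if b = 0 then iv k else jv k) = iv k' ∨
          (if b = 0 then iv k else jv k) = jv k' := by rw [h]; split_ifs <;> simp
      have hk : k = k' := (hpart _).unique hp1 hp2
      subst hk
      have hb : b = b' := by
        fin_cases b <;> fin_cases b' <;> simp_all
        · exact absurd h (hlt k).ne
        · exact absurd h.symm (hlt k).ne
      rw [hb]
    · intro t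
      obtain ⟨k, hk, -⟩ := hpart t
      rcases hk with h | h
      · exact ⟨(k, 0), by simp [h.symm]⟩
      · exact ⟨(k, 1), by simp [h.symm]⟩
  rw [← Fintype.sum_bijective _ hbij
    (fun p : Fin m × Fin 2 => f (if p.2 = 0 then iv p.1 else jv p.1)) f (fun p => rfl)]
  rw [Fintype.sum_prod_type]
  refine Finset.sum_congr rfl fun k _ => ?_
  rw [Fin.sum_univ_two]
  norm_num

/-- For even `d = 2m`, a real orthogonal `d×d` matrix `U` and a partition of the indices
into `m` disjoint pairs `(iv k, jv k)`, there exist extended orthogonal Givens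
transformations `G k` on the pairs `(iv k, jv k)` such that
`‖U − G₁ ⋯ G_m‖_F² = 2d − 2 Σ_k ‖U_{⟨iv k, jv k⟩}‖_*`. -/
theorem stmt7 {m : ℕ} (U : Matrix (Fin (2 * m)) (Fin (2 * m)) ℝ) (hU : Uᵀ * U = 1)
    (iv jv : Fin m → Fin (2 * m))
    (hlt : ∀ k, iv k < jv k)
    (hpart : ∀ t : Fin (2 * m), ∃! k : Fin m, t = iv k ∨ t = jv k) :
    ∃ G : Fin m → Matrix (Fin (2 * m)) (Fin (2 * m)) ℝ,
      (∀ k, IsExtGivens (iv k) (jv k) (G k)) ∧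
      frobSq (U - (List.ofFn G).prod) =
        2 * (2 * m : ℝ) - 2 * ∑ k, nuclearNorm (sub2 U (iv k) (jv k)) := by
  classical
  choose g hgform hgval using fun k => exists_g (sub2 U (iv k) (jv k))
  have hne : ∀ k, iv k ≠ jv k := fun k => (hlt k).ne
  refine ⟨fun k => embed (iv k) (jv k) (g k),
    fun k => isExtGivens_embed (hne k) (hgform k), ?_⟩
  have hdisj : ∀ k l : Fin m, k ≠ l →
      Disjoint ({iv k, jv k} : Finset (Fin (2 * m))) {iv l, jv l} := by
    intro k l hkl
    rw [Finset.disjoint_left]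
    intro t ht htl
    simp only [Finset.mem_insert, Finset.mem_singleton] at ht htl
    exact hkl ((hpart t).unique ht htl)
  obtain ⟨-, hEP⟩ := blocky_prod (fun k => embed (iv k) (jv k) (g k))
    (fun k => {iv k, jv k}) (fun k => blocky_embed _ _ _) hdisj
  set P := (List.ofFn fun k => embed (iv k) (jv k) (g k)).prod with hPdef
  have hPi : ∀ k q, P (iv k) q =
      if q = iv k then g k 0 0 else if q = jv k then g k 0 1 else 0 := by
    intro k q
    rw [hEP k (iv k) (by simp) q, embed_row_i]
  have hPj : ∀ k q, P (jv k) q =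
      if q = iv k then g k 1 0 else if q = jv k then g k 1 1 else 0 := by
    intro k q
    rw [hEP k (jv k) (by simp) q, embed_row_j (hne k)]
  have hgval' : ∀ k, U (iv k) (iv k) * g k 0 0 + U (iv k) (jv k) * g k 0 1 +
      U (jv k) (iv k) * g k 1 0 + U (jv k) (jv k) * g k 1 1 =
      nuclearNorm (sub2 U (iv k) (jv k)) := by
    intro k
    have h := hgval k
    simpa [sub2] using h
  have hinner : ∑ t, ∑ q, U t q * P t q = ∑ k, nuclearNorm (sub2 U (iv k) (jv k)) := by
    rw [sum_pairs iv jv hlt hpart (fun t => ∑ q, U t q * P t q)]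
    refine Finset.sum_congr rfl fun k _ => ?_
    have hi : ∑ q, U (iv k) q * P (iv k) q =
        U (iv k) (iv k) * g k 0 0 + U (iv k) (jv k) * g k 0 1 := by
      refine sum_ite_pair (hne k) _ _ _ fun q => ?_
      rw [hPi k q]
      split_ifs with h1 h2
      · rw [h1]
      · rw [h2]
      · ring
    have hj : ∑ q, U (jv k) q * P (jv k) q =
        U (jv k) (iv k) * g k 1 0 + U (jv k) (jv k) * g k 1 1 := by
      refine sum_ite_pair (hne k) _ _ _ fun q => ?_
      rw [hPj k q]
      split_ifs with h1 h2
      · rw [h1]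
      · rw [h2]
      · ring
    rw [hi, hj, ← hgval' k]
    ring
  have hfroP : frobSq P = 2 * (m : ℝ) := by
    unfold frobSq
    rw [sum_pairs iv jv hlt hpart (fun t => ∑ q, P t q ^ 2)]
    have hterm : ∀ k : Fin m, (∑ q, P (iv k) q ^ 2) + (∑ q, P (jv k) q ^ 2) = 2 := by
      intro k
      have hi : ∑ q, P (iv k) q ^ 2 = g k 0 0 ^ 2 + g k 0 1 ^ 2 := by
        refine sum_ite_pair (hne k) _ _ _ fun q => ?_
        rw [hPi k q]
        split_ifs <;> ring
      have hj : ∑ q, P (jv k) q ^ 2 = g k 1 0 ^ 2 + g k 1 1 ^ 2 := by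
        refine sum_ite_pair (hne k) _ _ _ fun q => ?_
        rw [hPj k q]
        split_ifs <;> ring
      obtain ⟨x, y, hxy, hfm⟩ := hgform k
      rw [hi, hj]
      rcases hfm with ⟨h1, h2, h3, h4⟩ | ⟨h1, h2, h3, h4⟩ <;>
        rw [h1, h2, h3, h4] <;> nlinarith [hxy]
    rw [Finset.sum_congr rfl fun k _ => hterm k, Finset.sum_const, Finset.card_univ]
    simp [Fintype.card_fin]
    ring
  have hfroU : frobSq U = 2 * (m : ℝ) := by
    have h := congrArg Matrix.trace hU
    rw [Matrix.trace_one] at h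
    simp only [Matrix.trace, Matrix.diag, Matrix.mul_apply, Matrix.transpose_apply,
      Fintype.card_fin] at h
    unfold frobSq
    rw [Finset.sum_comm]
    have h2 : ∑ q : Fin (2 * m), ∑ t : Fin (2 * m), U t q ^ 2 =
        ∑ q : Fin (2 * m), ∑ t : Fin (2 * m), U t q * U t q := by
      simp [pow_two]
    rw [h2, h]
    push_cast
    ring
  have expand : frobSq (U - P) =
      frobSq U - 2 * (∑ t, ∑ q, U t q * P t q) + frobSq P := by
    unfold frobSq
    simp only [Matrix.sub_apply]
    have e1 : ∀ t, ∑ q, (U t q - P t q) ^ 2 =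
        (∑ q, U t q ^ 2) - 2 * (∑ q, U t q * P t q) + (∑ q, P t q ^ 2) := by
      intro t
      rw [Finset.mul_sum, ← Finset.sum_sub_distrib, ← Finset.sum_add_distrib]
      exact Finset.sum_congr rfl fun q _ => by ring
    rw [Finset.sum_congr rfl fun t _ => e1 t, Finset.sum_add_distrib,
      Finset.sum_sub_distrib, ← Finset.mul_sum]
  rw [expand, hfroU, hfroP, hinner]
  push_cast
  ring
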